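/- arXiv:2305.17598 — 5 statements merged into one kernel-verified Lean document; each statement's English description precedes it below -/
import Mathlib

section
/- If a coloring λ* is within a factor r of the optimum for the linear penalty objective Σ_e p(e,λ) (in particular if it is optimal for it), then λ* is an r-approximation for the edge-mistake objective Σ_e 𝟙(e ∈ M_λ), where an edge is a mistake if some node in it lacks the edge's color. Formally: if Σ_e p(e,λ*) ≤ Σ_e p(e,λ) for all feasible λ, and every edge has size at most r, then Σ_e 𝟙(e ∈ M_{λ*}) ≤ r · Σ_e 𝟙(e ∈ M_λ) for all feasible λ. -/
theorem linear_opt_gives_r_approx {V ι : Type*} [DecidableEq V] (k r : ℕ)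
    (E : Finset ι) (edge : ι → Finset V) (color : ι → Fin k)
    (hr : ∀ e ∈ E, (edge e).card ≤ r)
    (Feas : (V → Finset (Fin k)) → Prop)
    (lamStar : V → Finset (Fin k)) (hFeas : Feas lamStar)
    (hopt : ∀ lam : V → Finset (Fin k), Feas lam →
      ∑ e ∈ E, ((edge e).filter (fun v => color e ∉ lamStar v)).card ≤
        ∑ e ∈ E, ((edge e).filter (fun v => color e ∉ lam v)).card) :
    ∀ lam : V → Finset (Fin k), Feas lam →
      (∑ e ∈ E, if 1 ≤ ((edge e).filter (fun v => color e ∉ lamStar v)).card then 1 else 0) ≤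
        r * ∑ e ∈ E, if 1 ≤ ((edge e).filter (fun v => color e ∉ lam v)).card then 1 else 0 := by
  intro lam hlam
  calc (∑ e ∈ E, if 1 ≤ ((edge e).filter (fun v => color e ∉ lamStar v)).card then 1 else 0)
      ≤ ∑ e ∈ E, ((edge e).filter (fun v => color e ∉ lamStar v)).card := by
        apply Finset.sum_le_sum
        intro e _
        split <;> omega
    _ ≤ ∑ e ∈ E, ((edge e).filter (fun v => color e ∉ lam v)).card := hopt lam hlam
    _ ≤ ∑ e ∈ E, r * (if 1 ≤ ((edge e).filter (fun v => color e ∉ lam v)).card then 1 else 0) := by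
        apply Finset.sum_le_sum
        intro e he
        have h1 : ((edge e).filter (fun v => color e ∉ lam v)).card ≤ r :=
          le_trans (Finset.card_filter_le _ _) (hr e he)
        split <;> omega
    _ = r * ∑ e ∈ E, if 1 ≤ ((edge e).filter (fun v => color e ∉ lam v)).card then 1 else 0 :=
        (Finset.mul_sum _ _ _).symm
end

section
/- (Budget bound in LP rounding for GOECC, per-node.) Let δ ∈ (0,1), y ≥ 0 a real, k ≥ 1 an integer, and x : [k] → [0,1] with Σ_{c=1}^k x(c) ≥ k - y - 1. Set ρ = (1-δ)/(⌊y⌉_δ + 2), where ⌊y⌉_δ is the δ-rounding of y. Then the number of colors c with x(c) < ρ is at most ⌊y⌉_δ + 1. -/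
noncomputable def deltaRound (δ x : ℝ) : ℤ :=
  if x - ⌊x⌋ < δ then ⌊x⌋ else ⌈x⌉

theorem goecc_node_budget_bound (k : ℕ) (hk : 1 ≤ k)
    (δ y : ℝ) (hδ0 : 0 < δ) (hδ1 : δ < 1) (hy : 0 ≤ y)
    (x : Fin k → ℝ) (hx : ∀ c, 0 ≤ x c ∧ x c ≤ 1)
    (hsum : (k : ℝ) - y - 1 ≤ ∑ c, x c)
    (ρ : ℝ) (hρ : ρ = (1 - δ) / ((deltaRound δ y : ℝ) + 2)) :
    ((Finset.univ.filter (fun c : Fin k => x c < ρ)).card : ℝ) ≤ (deltaRound δ y : ℝ) + 1 := by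
  set r : ℤ := deltaRound δ y with hr
  have hr0 : (0:ℝ) ≤ (r:ℝ) := by
    have : (0:ℤ) ≤ r := by
      rw [hr, deltaRound]
      split
      · exact Int.floor_nonneg.mpr hy
      · exact Int.ceil_nonneg hy
    exact_mod_cast this
  have hylt : y < (r:ℝ) + δ := by
    rw [hr, deltaRound]
    split_ifs with h
    · push_cast; linarith
    · have := Int.le_ceil y
      push_cast; linarith
  have hden : (0:ℝ) < (r:ℝ) + 2 := by linarith
  have hρ1 : ρ < 1 := by
    rw [hρ, div_lt_one hden]; push_cast; linarith
  set S := Finset.univ.filter (fun c : Fin k => x c < ρ) with hS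
  set m := S.card with hm
  -- sum over S ≤ m * ρ
  have hsumS : ∑ c ∈ S, x c ≤ (m:ℝ) * ρ := by
    calc ∑ c ∈ S, x c ≤ ∑ _c ∈ S, ρ := by
          apply Finset.sum_le_sum
          intro i hi
          exact le_of_lt ((Finset.mem_filter.mp hi).2)
      _ = (m:ℝ) * ρ := by rw [Finset.sum_const, nsmul_eq_mul]
  have hsumSc : ∑ c ∈ Finset.univ.filter (fun c : Fin k => ¬ x c < ρ), x c ≤
      ((Finset.univ.filter (fun c : Fin k => ¬ x c < ρ)).card : ℝ) := by
    calc ∑ c ∈ Finset.univ.filter (fun c : Fin k => ¬ x c < ρ), x c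
        ≤ ∑ _c ∈ Finset.univ.filter (fun c : Fin k => ¬ x c < ρ), (1:ℝ) := by
          apply Finset.sum_le_sum
          intro i _
          exact (hx i).2
      _ = _ := by rw [Finset.sum_const, nsmul_eq_mul, mul_one]
  have hcard : m + (Finset.univ.filter (fun c : Fin k => ¬ x c < ρ)).card = k := by
    rw [hm, hS]
    simpa using Finset.card_filter_add_card_filter_not
      (s := (Finset.univ : Finset (Fin k))) (p := fun c => x c < ρ)
  have hsplit : ∑ c, x c = ∑ c ∈ S, x c +
      ∑ c ∈ Finset.univ.filter (fun c : Fin k => ¬ x c < ρ), x c := by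
    rw [hS]
    exact (Finset.sum_filter_add_sum_filter_not Finset.univ (fun c => x c < ρ) x).symm
  have hcardR : ((Finset.univ.filter (fun c : Fin k => ¬ x c < ρ)).card : ℝ) = (k:ℝ) - m := by
    have : ((m : ℕ) : ℝ) + ((Finset.univ.filter (fun c : Fin k => ¬ x c < ρ)).card : ℝ) = (k:ℝ) := by
      exact_mod_cast congrArg (Nat.cast : ℕ → ℝ) hcard
    linarith
  have htotal : (k:ℝ) - y - 1 ≤ (m:ℝ) * ρ + ((k:ℝ) - m) := by
    rw [hsplit] at hsum
    rw [hcardR] at hsumSc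
    linarith
  have h1 : (m:ℝ) * (1 - ρ) ≤ y + 1 := by nlinarith
  have h2 : (r:ℝ) + 1 + δ = (1 - ρ) * ((r:ℝ) + 2) := by
    rw [hρ]; field_simp; ring
  have h3 : (m:ℝ) < (r:ℝ) + 2 := by nlinarith
  have h4 : (m:ℤ) < r + 2 := by exact_mod_cast h3
  have h5 : (m:ℤ) ≤ r + 1 := by omega
  exact_mod_cast h5
end

section
/- (LP integrality gap for RECC.) There is an edge-colored hypergraph (4 nodes v1,v2,v3,v4; edges e1 = {v1,v2,v3} of color 1 and e2 = {v2,v3,v4} of color 2) and budget b = 1 such that every assignment λ giving exactly one color to each non-deleted node and deleting at most 1 node makes at least one edge mistake, while there is a feasible fractional solution to the RECC LP relaxation with objective value 0 (e.g., x_{v2}^1 = x_{v2}^2 = x_{v3}^1 = x_{v3}^2 = z_{v2} = z_{v3} = 1/2, all other x_v^c appropriately set, x_{e1} = x_{e2} = 0). -/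
theorem recc_lp_integrality_gap :
    let e1 : Finset (Fin 4) := {0, 1, 2}
    let e2 : Finset (Fin 4) := {1, 2, 3}
    -- every integral solution with at most 1 deleted node makes a mistake
    ((∀ (lam : Fin 4 → Fin 2) (D : Finset (Fin 4)), D.card ≤ 1 →
        (∃ v ∈ e1, v ∉ D ∧ lam v ≠ 0) ∨ (∃ v ∈ e2, v ∉ D ∧ lam v ≠ 1)) ∧
    -- there is a feasible fractional LP solution with objective value 0
      (∃ (x : Fin 4 → Fin 2 → ℝ) (xe : Fin 2 → ℝ) (z : Fin 4 → ℝ),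
        (∀ v c, 0 ≤ x v c ∧ x v c ≤ 1) ∧
        (∀ v, 0 ≤ z v ∧ z v ≤ 1) ∧
        (∀ e, 0 ≤ xe e ∧ xe e ≤ 1) ∧
        (∀ v, (2 : ℝ) - 1 ≤ ∑ c, x v c) ∧
        (∀ v ∈ e1, x v 0 - z v ≤ xe 0) ∧
        (∀ v ∈ e2, x v 1 - z v ≤ xe 1) ∧
        (∑ v, z v ≤ 1) ∧
        xe 0 + xe 1 = 0)) := by
  intro e1 e2
  constructor
  · intro lam D hD
    have h12 : (1 : Fin 4) ∉ D ∨ (2 : Fin 4) ∉ D := by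
      by_contra h
      push_neg at h
      have hsub : ({1, 2} : Finset (Fin 4)) ⊆ D := by
        intro v hv
        simp only [Finset.mem_insert, Finset.mem_singleton] at hv
        rcases hv with rfl | rfl
        · exact h.1
        · exact h.2
      have := Finset.card_le_card hsub
      simp at this
      omega
    rcases h12 with h | h
    · by_cases hl : lam 1 = 0
      · right
        exact ⟨1, by simp [e2], h, by simp [hl]⟩
      · left
        exact ⟨1, by simp [e1], h, hl⟩
    · by_cases hl : lam 2 = 0
      · right
        exact ⟨2, by simp [e2], h, by simp [hl]⟩
      · left
        exact ⟨2, by simp [e1], h, hl⟩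
  · refine ⟨![![0, 1], ![1/2, 1/2], ![1/2, 1/2], ![1, 0]], ![0, 0],
      ![0, 1/2, 1/2, 0], ?_, ?_, ?_, ?_, ?_, ?_, ?_, ?_⟩
    · intro v c; fin_cases v <;> fin_cases c <;> norm_num
    · intro v; fin_cases v <;> norm_num
    · intro e; fin_cases e <;> norm_num
    · intro v; fin_cases v <;> norm_num [Fin.sum_univ_two]
    · intro v hv; fin_cases hv <;> norm_num [Matrix.cons_val_two, Matrix.cons_val_three]
    · intro v hv; fin_cases hv <;> norm_num [Matrix.cons_val_two, Matrix.cons_val_three]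
    · norm_num [Fin.sum_univ_four, Matrix.cons_val_two, Matrix.cons_val_three]
    · norm_num
end

section
/- (Kernel size for LOECC.) Suppose every node of an edge-colored hypergraph H is incident to edges of more than b distinct colors (no easy nodes), every hyperedge has size at most r, and there exists a set X of at most t edges such that assigning at most b colors per node satisfies all edges of E ∖ X. Then H has at most r·t nodes. -/
theorem loecc_kernel_size {V ι : Type*} [Fintype V] [DecidableEq V] [DecidableEq ι]
    (k r t b : ℕ)
    (E : Finset ι) (edge : ι → Finset V) (color : ι → Fin k)
    (hNoEasy : ∀ v : V, b < ((E.filter (fun e => v ∈ edge e)).image color).card)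
    (hr : ∀ e ∈ E, (edge e).card ≤ r)
    (hSol : ∃ X ⊆ E, X.card ≤ t ∧ ∃ lam : V → Finset (Fin k),
      (∀ v, (lam v).card ≤ b) ∧ ∀ e ∈ E \ X, ∀ v ∈ edge e, color e ∈ lam v) :
    Fintype.card V ≤ r * t := by
  obtain ⟨X, hXE, hXt, lam, hlamb, hsat⟩ := hSol
  -- every vertex lies in some edge of X
  have hcov : ∀ v : V, ∃ e ∈ X, v ∈ edge e := by
    intro v
    by_contra h
    push_neg at h
    have hsub : (E.filter (fun e => v ∈ edge e)).image color ⊆ lam v := by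
      intro c hc
      simp only [Finset.mem_image, Finset.mem_filter] at hc
      obtain ⟨e, ⟨heE, hve⟩, rfl⟩ := hc
      exact hsat e (Finset.mem_sdiff.mpr ⟨heE, fun hx => h e hx hve⟩) v hve
    exact absurd (le_trans (Finset.card_le_card hsub) (hlamb v)) (not_le.mpr (hNoEasy v))
  have huniv : (Finset.univ : Finset V) ⊆ X.biUnion edge := by
    intro v _
    obtain ⟨e, he, hv⟩ := hcov v
    exact Finset.mem_biUnion.mpr ⟨e, he, hv⟩
  calc Fintype.card V ≤ (X.biUnion edge).card := Finset.card_le_card huniv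
    _ ≤ ∑ e ∈ X, (edge e).card := Finset.card_biUnion_le
    _ ≤ ∑ _e ∈ X, r := Finset.sum_le_sum (fun e he => hr e (hXE he))
    _ = X.card * r := by simp [Finset.sum_const, mul_comm]
    _ ≤ t * r := Nat.mul_le_mul_right r hXt
    _ = r * t := mul_comm t r
end

section
/- (Correctness of the Partial Vertex Cover reduction, forward direction.) Let G be a graph with m edges and let (G, t, s) be a Partial Vertex Cover instance. Construct the hypergraph H with a node u_f per edge f of G and a hyperedge e_v per vertex v of G containing {u_f : f incident to v}, each e_v receiving a distinct color. If Y is a set of at most t vertices of G covering at least s edges, then deleting X = {e_v : v ∈ Y} from H leaves a hypergraph whose edges can all be satisfied by an assignment λ with |λ(u)| ≥ 1 for all nodes u and Σ_u (|λ(u)| - 1) ≤ m - s. -/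
theorem pvc_reduction_forward {V : Type*} [Fintype V] [DecidableEq V]
    (G : SimpleGraph V) [DecidableRel G.Adj]
    (m t s : ℕ) (hm : m = G.edgeFinset.card)
    (Y : Finset V) (hYcard : Y.card ≤ t)
    (hcover : s ≤ (G.edgeFinset.filter (fun f => ∃ v ∈ Y, v ∈ f)).card) :
    ∃ lam : Sym2 V → Finset V,
      (∀ f ∈ G.edgeFinset, 1 ≤ (lam f).card) ∧
      (∑ f ∈ G.edgeFinset, ((lam f).card - 1)) ≤ m - s ∧
      (∀ v : V, v ∉ Y → ∀ f ∈ G.edgeFinset, v ∈ f → v ∈ lam f) := by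
  classical
  set eF : Sym2 V → Finset V := fun f => {f.out.1, f.out.2} with heF
  have hmemF : ∀ (f : Sym2 V) (v : V), v ∈ eF f ↔ v ∈ f := by
    intro f v
    have hfo : f = s(f.out.1, f.out.2) := (f.out_eq).symm
    simp only [heF, Finset.mem_insert, Finset.mem_singleton]
    conv_rhs => rw [hfo]
    rw [Sym2.mem_iff]
  refine ⟨fun f => if (eF f \ Y).Nonempty then eF f \ Y else {f.out.1}, ?_, ?_, ?_⟩
  · intro f hf
    dsimp only
    split
    · next h => exact Finset.card_pos.mpr h
    · simp
  · -- sum bound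
    have hcard2 : ∀ f ∈ G.edgeFinset, (eF f).card ≤ 2 := by
      intro f hf
      exact (Finset.card_insert_le _ _).trans (by simp)
    have hbound : ∀ f ∈ G.edgeFinset,
        ((if (eF f \ Y).Nonempty then eF f \ Y else {f.out.1}).card - 1)
          ≤ if (∃ v ∈ Y, v ∈ f) then 0 else 1 := by
      intro f hf
      split
      · next hne =>
        split
        · next hcov =>
          obtain ⟨v, hvY, hvf⟩ := hcov
          have hv : v ∈ eF f := (hmemF f v).mpr hvf
          have h2 : (eF f).card ≤ 2 := hcard2 f hf
          have : (eF f \ Y).card < (eF f).card := by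
            apply Finset.card_lt_card
            constructor
            · exact Finset.sdiff_subset
            · intro hsub
              exact absurd hvY ((Finset.mem_sdiff.mp (hsub hv)).2)
          omega
        · next =>
          have := (Finset.card_le_card (Finset.sdiff_subset (s := eF f) (t := Y))).trans (hcard2 f hf)
          omega
      · next => simp
    calc ∑ f ∈ G.edgeFinset, ((if (eF f \ Y).Nonempty then eF f \ Y else {f.out.1}).card - 1)
        ≤ ∑ f ∈ G.edgeFinset, (if (∃ v ∈ Y, v ∈ f) then 0 else 1) :=
          Finset.sum_le_sum hbound
      _ = (G.edgeFinset.filter (fun f => ¬ ∃ v ∈ Y, v ∈ f)).card := by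
          rw [Finset.card_filter]
          simp [Finset.sum_ite]
      _ ≤ m - s := by
          have hsplit := Finset.card_filter_add_card_filter_not
            (s := G.edgeFinset) (p := fun f => ∃ v ∈ Y, v ∈ f)
          omega
  · intro v hv f hf hvf
    have hvF : v ∈ eF f \ Y := Finset.mem_sdiff.mpr ⟨(hmemF f v).mpr hvf, hv⟩
    dsimp only
    rw [if_pos ⟨v, hvF⟩]
    exact hvF
end
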